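/- The group GL_3(𝔽_2) of invertible 3×3 matrices over the field with two elements contains a nonabelian subgroup of order 21, and any two subgroups of GL_3(𝔽_2) of order 21 are conjugate in GL_3(𝔽_2). -/

import Mathlib

open Matrix Subgroup

namespace Stmt9Aux

set_option maxRecDepth 10000

abbrev GG := GL (Fin 3) (ZMod 2)

instance : Fact (Nat.Prime 7) := ⟨by norm_num⟩

def x : GG := ⟨!![0,0,1;1,0,1;0,1,0], !![1,1,0;0,0,1;1,0,0], by decide, by decide⟩
def a : GG := ⟨!![1,0,0;0,0,1;0,1,1], !![1,0,0;0,1,1;0,1,0], by decide, by decide⟩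
def gg : GG := ⟨!![1,1,0;0,1,0;0,0,1], !![1,1,0;0,1,0;0,0,1], by decide, by decide⟩

lemma hx7 : x ^ 7 = 1 := by decide
lemma hx1 : x ≠ 1 := by decide
lemma hax2 : a * x * a⁻¹ = x ^ 2 := by decide
lemma hax4 : a⁻¹ * x * a = x ^ 4 := by decide
lemma hcomm : a * x ≠ x * a := by decide

lemma ord7 : orderOf x = 7 := orderOf_eq_prime hx7 hx1

lemma cardGG : Nat.card GG = 168 := by rw [Matrix.card_GL_field]; decide

lemma fact7 {n : ℕ} (h0 : n ≠ 0) (h1 : 7 ∣ n) (h2 : ¬ 49 ∣ n) : n.factorization 7 = 1 := by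
  have p7 : Nat.Prime 7 := by norm_num
  have a1 : 7 ^ 1 ∣ n := by simpa using h1
  have a2 : ¬ 7 ^ 2 ∣ n := by norm_num; exact h2
  rw [p7.pow_dvd_iff_le_factorization h0] at a1 a2
  omega

lemma fact168 : (Nat.card GG).factorization 7 = 1 := by
  rw [cardGG]; exact fact7 (by norm_num) (by norm_num) (by norm_num)

def PS : Sylow 7 GG := Sylow.ofCard (zpowers x) (by rw [Nat.card_zpowers, ord7, fact168, pow_one])

lemma gx_not_mem : gg * x * gg⁻¹ ∉ zpowers x := by
  intro hmem
  obtain ⟨n, hn⟩ := (Submonoid.mem_powers_iff _ _).mp (mem_powers_iff_mem_zpowers.mpr hmem)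
  rw [pow_eq_pow_mod n hx7] at hn
  have hlt : n % 7 < 7 := Nat.mod_lt _ (by norm_num)
  set r := n % 7 with hr
  clear_value r
  interval_cases r <;> revert hn <;> decide

lemma n7 : Nat.card (Sylow 7 GG) = 8 := by
  have hdvd : Nat.card (Sylow 7 GG) ∣ (PS : Subgroup GG).index := Sylow.card_dvd_index PS
  have hcard : Nat.card (PS : Subgroup GG) = 7 := by
    show Nat.card (zpowers x) = 7
    rw [Nat.card_zpowers, ord7]
  have hmul := Subgroup.card_mul_index (PS : Subgroup GG)
  rw [hcard, cardGG] at hmul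
  have hidx : (PS : Subgroup GG).index = 24 := by omega
  rw [hidx] at hdvd
  have hmod : Nat.card (Sylow 7 GG) % 7 = 1 % 7 := card_sylow_modEq_one 7 GG
  have hpos : 0 < Nat.card (Sylow 7 GG) := Nat.card_pos
  have hne1 : Nat.card (Sylow 7 GG) ≠ 1 := by
    intro h1
    haveI : Subsingleton (Sylow 7 GG) := (Nat.card_eq_one_iff_unique.mp h1).1
    have hconj7 : (gg * x * gg⁻¹) ^ 7 = 1 := by rw [conj_pow, hx7]; group
    have hconj1 : gg * x * gg⁻¹ ≠ 1 := by decide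
    have ordc : orderOf (gg * x * gg⁻¹) = 7 := orderOf_eq_prime hconj7 hconj1
    have QS : Sylow 7 GG := Sylow.ofCard (zpowers (gg * x * gg⁻¹))
      (by rw [Nat.card_zpowers, ordc, fact168, pow_one])
    have hPQ : (Sylow.ofCard (zpowers (gg * x * gg⁻¹))
        (by rw [Nat.card_zpowers, ordc, fact168, pow_one]) : Sylow 7 GG) = PS := Subsingleton.elim _ _
    have : zpowers (gg * x * gg⁻¹) = zpowers x := congrArg Sylow.toSubgroup hPQ
    exact gx_not_mem (this ▸ mem_zpowers _)
  have hle : Nat.card (Sylow 7 GG) ≤ 24 := Nat.le_of_dvd (by norm_num) hdvd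
  set m := Nat.card (Sylow 7 GG)
  clear_value m
  interval_cases m <;> omega

lemma card_normalizer (Q : Sylow 7 GG) : Nat.card (normalizer ((Q : Subgroup GG) : Set GG)) = 21 := by
  have h1 : (normalizer ((Q : Subgroup GG) : Set GG)).index = 8 := by
    exact (Sylow.card_eq_index_normalizer Q).symm.trans n7
  have h2 := Subgroup.card_mul_index (normalizer ((Q : Subgroup GG) : Set GG))
  rw [h1, cardGG] at h2
  omega

lemma part1 : ∃ H : Subgroup GG, Nat.card H = 21 ∧ ¬ (∀ u v : H, u * v = v * u) := by
  refine ⟨normalizer ((PS : Subgroup GG) : Set GG), card_normalizer PS, ?_⟩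
  intro habs
  have hxH : x ∈ normalizer ((PS : Subgroup GG) : Set GG) := le_normalizer (mem_zpowers x)
  have haH : a ∈ normalizer ((PS : Subgroup GG) : Set GG) := by
    rw [mem_normalizer_iff]
    intro h
    show h ∈ zpowers x ↔ a * h * a⁻¹ ∈ zpowers x
    constructor
    · rintro ⟨k, rfl⟩
      show a * x ^ k * a⁻¹ ∈ zpowers x
      rw [← conj_zpow, hax2]
      exact zpow_mem (zpow_mem (mem_zpowers x) 2) k
    · rintro ⟨k, hk⟩
      have hk' : x ^ k = a * h * a⁻¹ := hk
      have heq : h = (a⁻¹ * x * a⁻¹⁻¹) ^ k := by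
        rw [conj_zpow, hk']; group
      rw [heq, inv_inv, hax4]
      exact zpow_mem (zpow_mem (mem_zpowers x) 4) k
  have := habs ⟨x, hxH⟩ ⟨a, haH⟩
  exact hcomm (by simpa [Subtype.ext_iff, mul_comm] using this.symm)

lemma key_normalizer (H : Subgroup GG) (hH : Nat.card H = 21) :
    ∃ P : Sylow 7 GG, H = normalizer ((P : Subgroup GG) : Set GG) := by
  have fH : (Nat.card H).factorization 7 = 1 := by
    rw [hH]; exact fact7 (by norm_num) (by norm_num) (by norm_num)
  obtain ⟨Q⟩ : Nonempty (Sylow 7 ↥H) := Sylow.nonempty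
  have cardQ : Nat.card (Q : Subgroup ↥H) = 7 := by
    rw [Sylow.card_eq_multiplicity, fH, pow_one]
  have hmul := Subgroup.card_mul_index (Q : Subgroup ↥H)
  rw [cardQ, hH] at hmul
  have hidx : (Q : Subgroup ↥H).index = 3 := by omega
  have nH : Nat.card (Sylow 7 ↥H) = 1 := by
    have hdvd : Nat.card (Sylow 7 ↥H) ∣ 3 := by
      have hdvd0 := Sylow.card_dvd_index Q
      rwa [hidx] at hdvd0
    have hmod : Nat.card (Sylow 7 ↥H) % 7 = 1 % 7 := card_sylow_modEq_one 7 ↥H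
    have hle : Nat.card (Sylow 7 ↥H) ≤ 3 := Nat.le_of_dvd (by norm_num) hdvd
    have hpos : 0 < Nat.card (Sylow 7 ↥H) := Nat.card_pos
    set m := Nat.card (Sylow 7 ↥H)
    clear_value m
    interval_cases m <;> omega
  have normalQ : (Q : Subgroup ↥H).Normal := by
    have h1 : (normalizer ((Q : Subgroup ↥H) : Set ↥H)).index = 1 := by
      exact (Sylow.card_eq_index_normalizer Q).symm.trans nH
    exact normalizer_eq_top_iff.mp (index_eq_one.mp h1)
  set P₁ : Subgroup GG := (Q : Subgroup ↥H).map H.subtype with hP₁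
  have cardP₁ : Nat.card P₁ = 7 := by
    rw [← cardQ]
    exact (Nat.card_congr (Subgroup.equivMapOfInjective _ _ H.subtype_injective).toEquiv).symm
  have P : Sylow 7 GG := Sylow.ofCard P₁ (by rw [cardP₁, fact168, pow_one])
  have key : ∀ h : ↥H, ∀ y ∈ P₁, (h : GG) * y * (h : GG)⁻¹ ∈ P₁ := by
    rintro h y hy
    rw [hP₁, mem_map] at hy
    obtain ⟨q, hq, rfl⟩ := hy
    refine mem_map.mpr ⟨h * q * h⁻¹, normalQ.conj_mem q hq h, ?_⟩
    rfl
  have hle : H ≤ normalizer (P₁ : Set GG) := by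
    intro h hh
    rw [mem_normalizer_iff]
    intro y
    constructor
    · exact fun hy => key ⟨h, hh⟩ y hy
    · intro hy
      have := key ⟨h, hh⟩⁻¹ _ hy
      simpa [mul_assoc] using this
  refine ⟨Sylow.ofCard P₁ (by rw [cardP₁, fact168, pow_one]), ?_⟩
  exact Subgroup.eq_of_le_of_card_ge hle (by
    rw [hH]
    exact le_of_eq (card_normalizer (Sylow.ofCard P₁ (by rw [cardP₁, fact168, pow_one]))))

lemma part2 (H K : Subgroup GG) (hH : Nat.card H = 21) (hK : Nat.card K = 21) :
    ∃ g : GG, K = H.map (MulAut.conj g).toMonoidHom := by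
  obtain ⟨PH, rfl⟩ := key_normalizer H hH
  obtain ⟨PK, rfl⟩ := key_normalizer K hK
  obtain ⟨g, hg⟩ := MulAction.exists_smul_eq GG PH PK
  refine ⟨g, ?_⟩
  have hsub : (PK : Subgroup GG) = (PH : Subgroup GG).map (MulAut.conj g).toMonoidHom := by
    rw [← hg]
    rfl
  rw [hsub, ← Subgroup.map_equiv_normalizer_eq]

end Stmt9Aux

theorem stmt9 :
    (∃ H : Subgroup (GL (Fin 3) (ZMod 2)),
        Nat.card H = 21 ∧ ¬ (∀ x y : H, x * y = y * x)) ∧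
    (∀ H K : Subgroup (GL (Fin 3) (ZMod 2)), Nat.card H = 21 → Nat.card K = 21 →
        ∃ g : GL (Fin 3) (ZMod 2), K = H.map (MulAut.conj g).toMonoidHom) := by
  exact ⟨Stmt9Aux.part1, Stmt9Aux.part2⟩
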